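/- For every connected graph G with no isolated vertex, the total domination number satisfies γ_t(G) ≤ α'(G) + π_p(G), where α'(G) is the matching number and π_p(G) is the path partition number. -/

import Mathlib

open SimpleGraph

variable {V : Type*}

/-- A walk is an induced path: it is a path and every adjacency between its
vertices is an edge of the walk. -/
def IsInducedWalk (G : SimpleGraph V) {u v : V} (p : G.Walk u v) : Prop :=
  p.IsPath ∧ ∀ a ∈ p.support, ∀ b ∈ p.support, G.Adj a b → s(a, b) ∈ p.edges

/-- A walk is an isometric (shortest) path between its endpoints. -/
def IsIsometricWalk (G : SimpleGraph V) {u v : V} (p : G.Walk u v) : Prop :=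
  p.IsPath ∧ p.length = G.dist u v

/-- A family of walks is a path cover: each walk is a path and every
vertex lies on at least one of the walks. -/
def IsPathCover (G : SimpleGraph V) {n : ℕ}
    (P : Fin n → Σ u : V, Σ v : V, G.Walk u v) : Prop :=
  (∀ i, (P i).2.2.IsPath) ∧ ∀ x : V, ∃ i, x ∈ (P i).2.2.support

/-- A family of walks is a path partition: each walk is a path and every
vertex lies on exactly one of the walks. -/
def IsPathPartition (G : SimpleGraph V) {n : ℕ}
    (P : Fin n → Σ u : V, Σ v : V, G.Walk u v) : Prop :=
  (∀ i, (P i).2.2.IsPath) ∧ ∀ x : V, ∃! i, x ∈ (P i).2.2.support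

/-- π_c : the path cover number. -/
noncomputable def pathCoverNum (G : SimpleGraph V) : ℕ :=
  sInf {n | ∃ P : Fin n → Σ u : V, Σ v : V, G.Walk u v, IsPathCover G P}

/-- ρ_c : the induced path cover number. -/
noncomputable def inducedPathCoverNum (G : SimpleGraph V) : ℕ :=
  sInf {n | ∃ P : Fin n → Σ u : V, Σ v : V, G.Walk u v,
    IsPathCover G P ∧ ∀ i, IsInducedWalk G (P i).2.2}

/-- ip_c : the isometric path cover number. -/
noncomputable def isometricPathCoverNum (G : SimpleGraph V) : ℕ :=
  sInf {n | ∃ P : Fin n → Σ u : V, Σ v : V, G.Walk u v,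
    IsPathCover G P ∧ ∀ i, IsIsometricWalk G (P i).2.2}

/-- π_p : the path partition number. -/
noncomputable def pathPartitionNum (G : SimpleGraph V) : ℕ :=
  sInf {n | ∃ P : Fin n → Σ u : V, Σ v : V, G.Walk u v, IsPathPartition G P}

/-- ρ_p : the induced path partition number. -/
noncomputable def inducedPathPartitionNum (G : SimpleGraph V) : ℕ :=
  sInf {n | ∃ P : Fin n → Σ u : V, Σ v : V, G.Walk u v,
    IsPathPartition G P ∧ ∀ i, IsInducedWalk G (P i).2.2}

/-- ip_p : the isometric path partition number. -/
noncomputable def isometricPathPartitionNum (G : SimpleGraph V) : ℕ :=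
  sInf {n | ∃ P : Fin n → Σ u : V, Σ v : V, G.Walk u v,
    IsPathPartition G P ∧ ∀ i, IsIsometricWalk G (P i).2.2}

/-- α' : the matching number, i.e. the maximum number of pairwise
vertex-disjoint edges. -/
noncomputable def matchingNum (G : SimpleGraph V) : ℕ :=
  sSup {n | ∃ s : Finset (Sym2 V), (↑s : Set (Sym2 V)) ⊆ G.edgeSet ∧ s.card = n ∧
    ∀ e ∈ s, ∀ f ∈ s, e ≠ f → ∀ x : V, ¬ (x ∈ e ∧ x ∈ f)}

/-- γ_t : the total domination number. -/
noncomputable def totalDominationNum (G : SimpleGraph V) : ℕ :=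
  sInf {n | ∃ s : Finset V, s.card = n ∧ ∀ v : V, ∃ u ∈ s, G.Adj v u}


section Helpers

open Classical Finset

variable {G : SimpleGraph V} {u v : V}

lemma aux_getVert_mem_support (p : G.Walk u v) (i : ℕ) : p.getVert i ∈ p.support := by
  induction p generalizing i with
  | nil => cases i <;> simp [Walk.getVert]
  | cons h q ih =>
    cases i with
    | zero => simp [Walk.getVert]
    | succ n => simpa [Walk.getVert_cons_succ] using Or.inr (ih n)

lemma aux_exists_getVert {x : V} {p : G.Walk u v} (hx : x ∈ p.support) :
    ∃ i ≤ p.length, p.getVert i = x := by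
  induction p with
  | @nil a =>
    refine ⟨0, le_refl _, ?_⟩
    have hxa : x = a := by simpa using hx
    simp [hxa]
  | cons h q ih =>
    rcases List.mem_cons.1 (by simpa [Walk.support_cons] using hx) with h1 | h2
    · exact ⟨0, Nat.zero_le _, h1.symm⟩
    · obtain ⟨i, hi, hgi⟩ := ih h2
      exact ⟨i + 1, by simpa [Walk.length_cons] using Nat.succ_le_succ hi,
        by simpa [Walk.getVert_cons_succ] using hgi⟩

lemma aux_getVert_inj {p : G.Walk u v} (hp : p.IsPath) :
    ∀ {i j : ℕ}, i ≤ p.length → j ≤ p.length → p.getVert i = p.getVert j → i = j := by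
  induction p with
  | nil => intro i j hi hj _; simp only [Walk.length_nil, Nat.le_zero] at hi hj; omega
  | @cons a b c h q ih =>
    rw [Walk.cons_isPath_iff] at hp
    intro i j hi hj hij
    match i, j with
    | 0, 0 => rfl
    | 0, (k+1) =>
      exfalso
      apply hp.2
      have : (Walk.cons h q).getVert (k+1) = q.getVert k := Walk.getVert_cons_succ _ _
      rw [this] at hij
      rw [show (Walk.cons h q).getVert 0 = a from Walk.getVert_zero _] at hij
      rw [hij]; exact aux_getVert_mem_support q k
    | (k+1), 0 =>
      exfalso
      apply hp.2
      have : (Walk.cons h q).getVert (k+1) = q.getVert k := Walk.getVert_cons_succ _ _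
      rw [this] at hij
      rw [show (Walk.cons h q).getVert 0 = a from Walk.getVert_zero _] at hij
      rw [← hij]; exact aux_getVert_mem_support q k
    | (k+1), (l+1) =>
      have hk : k ≤ q.length := by simpa [Walk.length_cons] using hi
      have hl : l ≤ q.length := by simpa [Walk.length_cons] using hj
      have : q.getVert k = q.getVert l := by
        simpa [Walk.getVert_cons_succ] using hij
      have := ih hp.1 hk hl this
      omega

/-- positions of a total dominating pattern on a path with `m` vertices. -/
def domPos (m : ℕ) : Finset ℕ :=
  (Finset.range m).filter (fun i => i % 4 = 1 ∨ i % 4 = 2) ∪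
    (if m % 4 = 1 ∨ m % 4 = 2 then {m - 2} else ∅)

lemma domPos_cover {m : ℕ} (hm : 2 ≤ m) {i : ℕ} (hi : i < m) :
    ∃ j ∈ domPos m, j < m ∧ (j = i + 1 ∨ i = j + 1) := by
  by_cases h1 : i + 1 < m ∧ ((i + 1) % 4 = 1 ∨ (i + 1) % 4 = 2)
  · exact ⟨i + 1, Finset.mem_union_left _
      (Finset.mem_filter.2 ⟨Finset.mem_range.2 h1.1, h1.2⟩), h1.1, Or.inl rfl⟩
  by_cases h2 : 1 ≤ i ∧ ((i - 1) % 4 = 1 ∨ (i - 1) % 4 = 2)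
  · exact ⟨i - 1, Finset.mem_union_left _
      (Finset.mem_filter.2 ⟨Finset.mem_range.2 (by omega), h2.2⟩), by omega, Or.inr (by omega)⟩
  · have hm4 : m % 4 = 1 ∨ m % 4 = 2 := by omega
    refine ⟨m - 2, Finset.mem_union_right _ (by simp [if_pos hm4]), by omega, Or.inr (by omega)⟩

lemma card_filter_mod4 (m : ℕ) :
    ((Finset.range m).filter (fun i => i % 4 = 1 ∨ i % 4 = 2)).card
      = (m + 2) / 4 + (m + 1) / 4 := by
  induction m with
  | zero => simp
  | succ n ih =>
    rw [Finset.range_add_one, Finset.filter_insert]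
    by_cases h : n % 4 = 1 ∨ n % 4 = 2
    · rw [if_pos h, Finset.card_insert_of_notMem (by simp), ih]
      omega
    · rw [if_neg h, ih]
      omega

lemma domPos_card (m : ℕ) : (domPos m).card ≤ m / 2 + 1 := by
  have h := card_filter_mod4 m
  unfold domPos
  refine le_trans (Finset.card_union_le _ _) ?_
  by_cases hm : m % 4 = 1 ∨ m % 4 = 2
  · rw [if_pos hm]
    have : ({m - 2} : Finset ℕ).card = 1 := Finset.card_singleton _
    omega
  · rw [if_neg hm]
    simp only [Finset.card_empty]
    omega

/-- A matching using every other edge of a path. -/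
noncomputable def matchSet (p : G.Walk u v) : Finset (Sym2 V) :=
  (Finset.range ((p.length + 1) / 2)).image
    (fun j => s(p.getVert (2 * j), p.getVert (2 * j + 1)))

lemma matchSet_subset (p : G.Walk u v) : ↑(matchSet p) ⊆ G.edgeSet := by
  intro e he
  simp only [matchSet, Finset.coe_image, Set.mem_image, Finset.mem_coe,
    Finset.mem_range] at he
  obtain ⟨j, hj, rfl⟩ := he
  exact (p.adj_getVert_succ (by omega)).symm.symm

lemma mem_support_of_mem_matchSet {p : G.Walk u v} {e : Sym2 V} {x : V}
    (he : e ∈ matchSet p) (hx : x ∈ e) : x ∈ p.support := by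
  simp only [matchSet, Finset.mem_image, Finset.mem_range] at he
  obtain ⟨j, hj, rfl⟩ := he
  rcases Sym2.mem_iff.1 hx with h | h <;> rw [h] <;> exact aux_getVert_mem_support p _

lemma matchSet_card {p : G.Walk u v} (hp : p.IsPath) :
    (matchSet p).card = (p.length + 1) / 2 := by
  rw [matchSet, Finset.card_image_of_injOn, Finset.card_range]
  intro a ha b hb hab
  simp only [Finset.coe_range, Set.mem_Iio] at ha hb
  have h1 : 2 * a + 1 ≤ p.length := by omega
  have h2 : 2 * b + 1 ≤ p.length := by omega
  rcases Sym2.eq_iff.1 hab with ⟨hx, _⟩ | ⟨hx, hy⟩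
  · have := aux_getVert_inj hp (by omega) (by omega) hx
    omega
  · have := aux_getVert_inj hp (by omega) (by omega) hx
    omega

lemma matchSet_pairwise {p : G.Walk u v} (hp : p.IsPath) {e f : Sym2 V}
    (he : e ∈ matchSet p) (hf : f ∈ matchSet p) (hef : e ≠ f) (x : V) :
    ¬(x ∈ e ∧ x ∈ f) := by
  rintro ⟨hxe, hxf⟩
  simp only [matchSet, Finset.mem_image, Finset.mem_range] at he hf
  obtain ⟨j, hj, rfl⟩ := he
  obtain ⟨l, hl, rfl⟩ := hf
  have h1 : 2 * j + 1 ≤ p.length := by omega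
  have h2 : 2 * l + 1 ≤ p.length := by omega
  have hjl : j ≠ l := fun h => hef (by rw [h])
  rcases Sym2.mem_iff.1 hxe with h | h <;> rcases Sym2.mem_iff.1 hxf with h' | h' <;>
  · rw [h] at h'
    have := aux_getVert_inj hp (by omega) (by omega) h'
    omega

/-- A total dominating set inside a path (needs length ≥ 1). -/
noncomputable def domSet (p : G.Walk u v) : Finset V :=
  (domPos (p.length + 1)).image p.getVert

lemma domSet_card (p : G.Walk u v) : (domSet p).card ≤ (p.length + 1) / 2 + 1 := by
  refine le_trans (Finset.card_image_le) ?_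
  exact domPos_card _

lemma domSet_cover {p : G.Walk u v} (hp1 : 1 ≤ p.length) {x : V} (hx : x ∈ p.support) :
    ∃ y ∈ domSet p, G.Adj x y := by
  obtain ⟨i, hi, rfl⟩ := aux_exists_getVert hx
  obtain ⟨j, hjmem, hjlt, hjc⟩ := domPos_cover (m := p.length + 1) (by omega) (by omega : i < p.length + 1)
  refine ⟨p.getVert j, Finset.mem_image_of_mem _ hjmem, ?_⟩
  rcases hjc with h | h
  · rw [h]
    exact p.adj_getVert_succ (by omega)
  · rw [h]
    exact (p.adj_getVert_succ (by omega)).symm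

end Helpers

theorem stmt_16 {V : Type*} [Fintype V] (G : SimpleGraph V)
    (hconn : G.Connected) (hiso : ∀ v : V, ∃ u : V, G.Adj v u) :
    totalDominationNum G ≤ matchingNum G + pathPartitionNum G := by
  classical
  -- the set of path-partition sizes is nonempty (singleton paths)
  have hne : {n | ∃ P : Fin n → Σ u : V, Σ v : V, G.Walk u v, IsPathPartition G P}.Nonempty := by
    refine ⟨Fintype.card V, fun i => ⟨(Fintype.equivFin V).symm i,
      (Fintype.equivFin V).symm i, Walk.nil⟩, fun i => Walk.IsPath.nil, ?_⟩
    intro x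
    refine ⟨Fintype.equivFin V x, by simp, ?_⟩
    intro j hj
    have hx : x = (Fintype.equivFin V).symm j := by simpa using hj
    simp [hx]
  have hmem : ∃ P : Fin (pathPartitionNum G) → Σ u : V, Σ v : V, G.Walk u v,
      IsPathPartition G P := Nat.sInf_mem hne
  obtain ⟨P, hPpath, hPuniq⟩ := hmem
  set D : Fin (pathPartitionNum G) → Finset V := fun i =>
    if (P i).2.2.length = 0 then {Classical.choose (hiso (P i).1)} else domSet (P i).2.2
    with hD
  set M : Fin (pathPartitionNum G) → Finset (Sym2 V) := fun i => matchSet (P i).2.2 with hM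
  set S : Finset V := Finset.univ.biUnion D with hS
  set Ms : Finset (Sym2 V) := Finset.univ.biUnion M with hMs
  have hDcard : ∀ i, (D i).card ≤ (M i).card + 1 := by
    intro i
    rw [hM, matchSet_card (hPpath i)]
    by_cases h : (P i).2.2.length = 0
    · simp [hD, Walk.nil_iff_length_eq.mpr h]
    · simp only [hD, if_neg h]
      exact domSet_card (P i).2.2
  have hdom : ∀ x : V, ∃ y ∈ S, G.Adj x y := by
    intro x
    obtain ⟨i, hi, -⟩ := hPuniq x
    by_cases h : (P i).2.2.length = 0
    · obtain ⟨j, hj, hgj⟩ := aux_exists_getVert hi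
      have hj0 : j = 0 := by omega
      have hx : x = (P i).1 := by rw [← hgj, hj0, Walk.getVert_zero]
      refine ⟨Classical.choose (hiso (P i).1), Finset.mem_biUnion.2
        ⟨i, Finset.mem_univ i, by simp [hD, Walk.nil_iff_length_eq.mpr h]⟩, ?_⟩
      rw [hx]
      exact Classical.choose_spec (hiso (P i).1)
    · obtain ⟨y, hy, hadj⟩ := domSet_cover (Nat.one_le_iff_ne_zero.2 h) hi
      exact ⟨y, Finset.mem_biUnion.2 ⟨i, Finset.mem_univ i, by simp [hD, mt Walk.nil_iff_length_eq.mp h, hy]⟩, hadj⟩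
  have hγ : totalDominationNum G ≤ S.card := Nat.sInf_le ⟨S, rfl, hdom⟩
  have hsupp : ∀ i (e : Sym2 V) (x : V), e ∈ M i → x ∈ e → x ∈ (P i).2.2.support := by
    intro i e x he hx
    exact mem_support_of_mem_matchSet he hx
  have hMdisj : ∀ i ∈ (Finset.univ : Finset (Fin (pathPartitionNum G))),
      ∀ j ∈ (Finset.univ : Finset (Fin (pathPartitionNum G))), i ≠ j →
      Disjoint (M i) (M j) := by
    intro i _ j _ hij
    rw [Finset.disjoint_left]
    intro e hei hej
    have hx : Sym2.Mem.other (Sym2.out_fst_mem e) ∈ e := Sym2.other_mem _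
    have h1 := hsupp i e _ hei hx
    have h2 := hsupp j e _ hej hx
    obtain ⟨i', -, huniq⟩ := hPuniq (Sym2.Mem.other (Sym2.out_fst_mem e))
    exact hij ((huniq i h1).trans (huniq j h2).symm)
  have hMscard : Ms.card = ∑ i, (M i).card := Finset.card_biUnion hMdisj
  have hmatch : Ms.card ∈ {n | ∃ s : Finset (Sym2 V), (↑s : Set (Sym2 V)) ⊆ G.edgeSet ∧
      s.card = n ∧ ∀ e ∈ s, ∀ f ∈ s, e ≠ f → ∀ x : V, ¬ (x ∈ e ∧ x ∈ f)} := by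
    refine ⟨Ms, ?_, rfl, ?_⟩
    · intro e he
      obtain ⟨i, -, hei⟩ := Finset.mem_biUnion.1 he
      exact matchSet_subset _ hei
    · intro e he f hf hef x
      obtain ⟨i, -, hei⟩ := Finset.mem_biUnion.1 he
      obtain ⟨j, -, hfj⟩ := Finset.mem_biUnion.1 hf
      by_cases hij : i = j
      · subst hij
        exact matchSet_pairwise (hPpath i) hei hfj hef x
      · rintro ⟨hxe, hxf⟩
        have h1 := hsupp i e x hei hxe
        have h2 := hsupp j f x hfj hxf
        obtain ⟨i', -, huniq⟩ := hPuniq x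
        exact hij ((huniq i h1).trans (huniq j h2).symm)
  have hbdd : BddAbove {n | ∃ s : Finset (Sym2 V), (↑s : Set (Sym2 V)) ⊆ G.edgeSet ∧
      s.card = n ∧ ∀ e ∈ s, ∀ f ∈ s, e ≠ f → ∀ x : V, ¬ (x ∈ e ∧ x ∈ f)} := by
    refine ⟨Fintype.card (Sym2 V), ?_⟩
    rintro n ⟨s, -, hc, -⟩
    rw [← hc]
    exact Finset.card_le_univ s
  have hM_le : Ms.card ≤ matchingNum G := le_csSup hbdd hmatch
  calc totalDominationNum G ≤ S.card := hγ
    _ ≤ ∑ i, (D i).card := Finset.card_biUnion_le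
    _ ≤ ∑ i, ((M i).card + 1) := Finset.sum_le_sum (fun i _ => hDcard i)
    _ = (∑ i, (M i).card) + pathPartitionNum G := by
        rw [Finset.sum_add_distrib, Finset.sum_const, Finset.card_univ, Fintype.card_fin,
          smul_eq_mul, mul_one]
    _ = Ms.card + pathPartitionNum G := by rw [hMscard]
    _ ≤ matchingNum G + pathPartitionNum G := Nat.add_le_add_right hM_le _
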